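/- Let F be a field, A a unital associative F-algebra, and v ∈ A such that for every k ≥ 1 there exists z ∈ A with ad_v^k(z) = 1. Let n ≥ 1, r ∈ ℕ, and let λ : S_n × B_r → F be a family of scalars, not all zero. Then for every a ∈ A_∞(v) there exist x_1, …, x_n ∈ A such that a = Σ_{σ ∈ S_n} Σ_{b ∈ B_r} λ_{σ,b} · ∏_{j=1}^n ad_v^{b_{σ(j)}}(x_{σ(j)}). (That is, A_∞(v) is contained in the image of every nonzero admissible partially commutative polynomial of type one; in particular, if ad_v is surjective this gives surjectivity on A.) -/

import Mathlib

/-- The inner derivation `ad_v : x ↦ v*x - x*v`. -/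
def adE {A : Type*} [Ring A] (v : A) : A → A := fun x => v * x - x * v

namespace S18

section DBasics

variable {A : Type*} [Ring A]

theorem adE_apply (v x : A) : adE v x = v * x - x * v := rfl

theorem adE_zero (v : A) : adE v 0 = 0 := by simp [adE]

theorem adE_iter_zero (v : A) (k : ℕ) : (adE v)^[k] 0 = 0 := by
  induction k with
  | zero => rfl
  | succ k ih => rw [Function.iterate_succ_apply, adE_zero, ih]

theorem adE_mul (v x y : A) : adE v (x * y) = adE v x * y + x * adE v y := by
  simp only [adE, sub_mul, mul_sub, mul_assoc]
  abel

theorem adE_mul_left (v w x : A) (h : adE v w = 0) :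
    adE v (w * x) = w * adE v x := by
  rw [adE_mul, h, zero_mul, zero_add]

theorem adE_iter_mul_left (v w : A) (h : adE v w = 0) (k : ℕ) (x : A) :
    (adE v)^[k] (w * x) = w * (adE v)^[k] x := by
  induction k generalizing x with
  | zero => rfl
  | succ k ih => rw [Function.iterate_succ_apply, Function.iterate_succ_apply,
      adE_mul_left v w x h, ih]

theorem adE_vpow (v : A) (k : ℕ) : adE v (v ^ k) = 0 := by
  simp [adE, ← pow_succ, ← pow_succ']

theorem adE_iter_eventually_zero (v g : A) (c : ℕ)
    (h : adE v ((adE v)^[c] g) = 0) : ∀ e, c < e → (adE v)^[e] g = 0 := by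
  intro e hce
  obtain ⟨m, rfl⟩ : ∃ m, e = m + 1 + c := ⟨e - c - 1, by omega⟩
  rw [Function.iterate_add_apply, Function.iterate_succ_apply, h, adE_iter_zero]

/-- gadget: an element with `(ad v)^[c] g = v^k` and all higher iterates zero. -/
theorem gadget (v : A) (hv : ∀ k : ℕ, 1 ≤ k → ∃ z : A, (adE v)^[k] z = 1)
    (c k : ℕ) : ∃ g : A, (adE v)^[c] g = v ^ k ∧ ∀ e, c < e → (adE v)^[e] g = 0 := by
  rcases Nat.eq_zero_or_pos c with rfl | hc
  · exact ⟨v ^ k, rfl, adE_iter_eventually_zero v _ 0 (by simpa using adE_vpow v k)⟩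
  · obtain ⟨z, hz⟩ := hv c hc
    refine ⟨v ^ k * z, ?_, ?_⟩
    · rw [adE_iter_mul_left v _ (adE_vpow v k), hz, mul_one]
    · apply adE_iter_eventually_zero
      rw [adE_iter_mul_left v _ (adE_vpow v k), hz, mul_one, adE_vpow]

end DBasics

section Smul

variable {F : Type*} [Field F] {A : Type*} [Ring A] [Algebra F A]

theorem adE_smul (v : A) (c : F) (x : A) : adE v (c • x) = c • adE v x := by
  simp [adE, mul_smul_comm, smul_mul_assoc, smul_sub]

theorem adE_iter_smul (v : A) (k : ℕ) (c : F) (x : A) :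
    (adE v)^[k] (c • x) = c • (adE v)^[k] x := by
  induction k generalizing x with
  | zero => rfl
  | succ k ih => rw [Function.iterate_succ_apply, Function.iterate_succ_apply, adE_smul, ih]

end Smul

section Words

variable {A : Type*} [Ring A]

abbrev Word (n : ℕ) := List (Fin n × ℕ)

def bump {n : ℕ} : ℕ → Word n → Word n
  | _, [] => []
  | 0, p :: t => (p.1, p.2 + 1) :: t
  | ℓ + 1, p :: t => p :: bump ℓ t

@[simp] theorem bump_nil {n : ℕ} (ℓ : ℕ) : bump (n := n) ℓ [] = [] := by cases ℓ <;> rfl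

@[simp] theorem bump_cons_zero {n : ℕ} (p : Fin n × ℕ) (t : Word n) :
    bump 0 (p :: t) = (p.1, p.2 + 1) :: t := rfl

@[simp] theorem bump_cons_succ {n : ℕ} (ℓ : ℕ) (p : Fin n × ℕ) (t : Word n) :
    bump (ℓ + 1) (p :: t) = p :: bump ℓ t := rfl

theorem bump_map_fst {n : ℕ} (ℓ : ℕ) (w : Word n) :
    (bump ℓ w).map Prod.fst = w.map Prod.fst := by
  induction w generalizing ℓ with
  | nil => simp
  | cons p t ih => cases ℓ with
    | zero => simp
    | succ ℓ => simp [ih]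

theorem bump_length {n : ℕ} (ℓ : ℕ) (w : Word n) : (bump ℓ w).length = w.length := by
  induction w generalizing ℓ with
  | nil => simp
  | cons p t ih => cases ℓ with
    | zero => simp
    | succ ℓ => simp [ih]

theorem bump_sum {n : ℕ} (ℓ : ℕ) (w : Word n) (h : ℓ < w.length) :
    ((bump ℓ w).map Prod.snd).sum = (w.map Prod.snd).sum + 1 := by
  induction w generalizing ℓ with
  | nil => simp at h
  | cons p t ih => cases ℓ with
    | zero => simp; ring
    | succ ℓ =>
      simp only [bump_cons_succ, List.map_cons, List.sum_cons]
      rw [ih ℓ (by simpa using h)]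
      ring

def wval (v : A) {n : ℕ} (x : Fin n → A) (w : Word n) : A :=
  (w.map fun p => (adE v)^[p.2] (x p.1)).prod

@[simp] theorem wval_nil (v : A) {n : ℕ} (x : Fin n → A) : wval v x [] = 1 := rfl

theorem wval_cons (v : A) {n : ℕ} (x : Fin n → A) (p : Fin n × ℕ) (t : Word n) :
    wval v x (p :: t) = (adE v)^[p.2] (x p.1) * wval v x t := by
  simp [wval]

theorem wval_append (v : A) {n : ℕ} (x : Fin n → A) (w₁ w₂ : Word n) :
    wval v x (w₁ ++ w₂) = wval v x w₁ * wval v x w₂ := by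
  simp [wval]

theorem wval_update (v : A) {n : ℕ} (x : Fin n → A) (i : Fin n) (g : A) (w : Word n)
    (h : i ∉ w.map Prod.fst) :
    wval v (Function.update x i g) w = wval v x w := by
  induction w with
  | nil => rfl
  | cons p t ih =>
    simp only [List.map_cons, List.mem_cons] at h
    push_neg at h
    rw [wval_cons, wval_cons, ih h.2, Function.update_of_ne (Ne.symm h.1)]

theorem v_mul_wval (v : A) {n : ℕ} (x : Fin n → A) (w : Word n) :
    v * wval v x w = wval v x w * v +
      ∑ ℓ ∈ Finset.range w.length, wval v x (bump ℓ w) := by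
  induction w with
  | nil => simp
  | cons p t ih =>
    have hf : v * (adE v)^[p.2] (x p.1) =
        (adE v)^[p.2] (x p.1) * v + (adE v)^[p.2 + 1] (x p.1) := by
      rw [Function.iterate_succ_apply', adE_apply]; abel
    rw [wval_cons, ← mul_assoc, hf, add_mul, mul_assoc, ih, mul_add, List.length_cons,
      Finset.sum_range_succ']
    simp only [bump_cons_succ, bump_cons_zero, wval_cons, Finset.mul_sum]
    rw [Function.iterate_succ_apply']
    simp only [mul_assoc]
    abel
end Words

end S18
section FinsuppOps

variable {F : Type*} [Field F] {A : Type*} [Ring A] [Algebra F A]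

abbrev SW (n : ℕ) := S18.Word n × S18.Word n

open S18

noncomputable def Ev (v : A) {n : ℕ} (x : Fin n → A) : (Word n →₀ F) →ₗ[F] A :=
  Finsupp.linearCombination F (wval v x)

noncomputable def Esp (v : A) {n : ℕ} (x : Fin n → A) (k : ℕ) : (SW n →₀ F) →ₗ[F] A :=
  Finsupp.linearCombination F (fun ps => wval v x ps.1 * (v ^ k * wval v x ps.2))

noncomputable def Dsp (F : Type*) [Field F] {n : ℕ} : (SW n →₀ F) →ₗ[F] (SW n →₀ F) :=
  Finsupp.lsum F (fun ps => ∑ ℓ ∈ Finset.range ps.2.length, Finsupp.lsingle (ps.1, bump ℓ ps.2))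

noncomputable def Csp (F : Type*) [Field F] {n : ℕ} : (SW n →₀ F) →ₗ[F] (Word n →₀ F) :=
  Finsupp.lsum F (fun ps => Finsupp.lsingle (ps.1 ++ ps.2))

theorem Ev_single (v : A) {n : ℕ} (x : Fin n → A) (w : Word n) (c : F) :
    Ev v x (Finsupp.single w c) = c • wval v x w :=
  Finsupp.linearCombination_single F (v := wval v x) c w

theorem Esp_single (v : A) {n : ℕ} (x : Fin n → A) (k : ℕ) (ps : SW n) (c : F) :
    Esp v x k (Finsupp.single ps c) = c • (wval v x ps.1 * (v ^ k * wval v x ps.2)) :=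
  Finsupp.linearCombination_single F _ _

theorem Dsp_single {n : ℕ} (ps : SW n) (c : F) :
    Dsp F (Finsupp.single ps c) =
      ∑ ℓ ∈ Finset.range ps.2.length, Finsupp.single (ps.1, bump ℓ ps.2) c := by
  rw [Dsp, Finsupp.lsum_single, LinearMap.sum_apply]
  simp [Finsupp.lsingle_apply]

theorem Csp_single {n : ℕ} (ps : SW n) (c : F) :
    Csp F (Finsupp.single ps c) = Finsupp.single (ps.1 ++ ps.2) c := by
  rw [Csp, Finsupp.lsum_single, Finsupp.lsingle_apply]

theorem esp_zero_eq (v : A) {n : ℕ} (x : Fin n → A) (μ : SW n →₀ F) :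
    Esp v x 0 μ = Ev v x (Csp F μ) := by
  induction μ using Finsupp.induction_linear with
  | zero => simp
  | add f g hf hg => simp [map_add, hf, hg]
  | single ps c =>
    rw [Esp_single, Csp_single, Ev_single, wval_append]
    simp [mul_assoc]

theorem esp_succ (v : A) {n : ℕ} (x : Fin n → A) (k : ℕ) (μ : SW n →₀ F) :
    Esp v x (k + 1) μ = (Esp v x k μ) * v + Esp v x k (Dsp F μ) := by
  induction μ using Finsupp.induction_linear with
  | zero => simp
  | add f g hf hg =>
    simp only [map_add, hf, hg, add_mul]
    abel
  | single ps c =>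
    rw [Dsp_single, map_sum]
    simp only [Esp_single]
    have core : wval v x ps.1 * (v ^ (k + 1) * wval v x ps.2) =
        wval v x ps.1 * (v ^ k * wval v x ps.2) * v +
          ∑ ℓ ∈ Finset.range ps.2.length,
            wval v x ps.1 * (v ^ k * wval v x (bump ℓ ps.2)) := by
      rw [pow_succ, mul_assoc (v ^ k) v, v_mul_wval, mul_add, Finset.mul_sum, mul_add,
        Finset.mul_sum]
      simp only [mul_assoc]
      try abel
    rw [core, smul_add, Finset.smul_sum, smul_mul_assoc]

theorem esp_eq_of_lower_zero (v : A) {n : ℕ} (x : Fin n → A) (k : ℕ) (μ : SW n →₀ F)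
    (h : ∀ j, j < k → Csp F ((Dsp F ^ j) μ) = 0) :
    Esp v x k μ = Ev v x (Csp F ((Dsp F ^ k) μ)) := by
  induction k generalizing μ with
  | zero => simpa using esp_zero_eq v x μ
  | succ k ih =>
    rw [esp_succ]
    have h1 : Esp v x k μ = 0 := by
      rw [ih μ fun j hj => h j (by omega), h k (by omega), map_zero]
    have h2 : ∀ j, j < k → Csp F ((Dsp F ^ j) (Dsp F μ)) = 0 := by
      intro j hj
      rw [← Module.End.mul_apply, ← pow_succ]
      exact h (j + 1) (by omega)
    rw [h1, zero_mul, zero_add, ih (Dsp F μ) h2, ← Module.End.mul_apply, ← pow_succ]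
end FinsuppOps
section PC

open S18

variable {F : Type*} [Field F]

def pc {n : ℕ} : ℕ → SW n → SW n → ℕ
  | 0, s, t => if s = t then 1 else 0
  | k + 1, s, t => ∑ ℓ ∈ Finset.range s.2.length, pc k (s.1, bump ℓ s.2) t

theorem forall2_le_trans : ∀ {l₁ l₂ l₃ : List ℕ}, List.Forall₂ (· ≤ ·) l₁ l₂ →
    List.Forall₂ (· ≤ ·) l₂ l₃ → List.Forall₂ (· ≤ ·) l₁ l₃ := by
  intro l₁ l₂ l₃ h12 h23
  induction h12 generalizing l₃ with
  | nil => cases h23; exact List.Forall₂.nil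
  | cons h t ih =>
    cases h23 with
    | cons h' t' => exact List.Forall₂.cons (le_trans h h') (ih t')

theorem forall2_le_sum : ∀ {l₁ l₂ : List ℕ}, List.Forall₂ (· ≤ ·) l₁ l₂ →
    l₁.sum ≤ l₂.sum := by
  intro l₁ l₂ h
  induction h with
  | nil => simp
  | cons h t ih => simp only [List.sum_cons]; omega

theorem forall2_le_bump {n : ℕ} (ℓ : ℕ) (w : Word n) :
    List.Forall₂ (· ≤ ·) (w.map Prod.snd) ((bump ℓ w).map Prod.snd) := by
  induction w generalizing ℓ with
  | nil => simp
  | cons p t ih =>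
    cases ℓ with
    | zero =>
      simp only [bump_cons_zero, List.map_cons]
      exact List.Forall₂.cons (by omega) (List.forall₂_same.2 fun _ _ => le_rfl)
    | succ ℓ =>
      simp only [bump_cons_succ, List.map_cons]
      exact List.Forall₂.cons le_rfl (ih ℓ)

theorem pc_ne {n : ℕ} : ∀ (k : ℕ) (s t : SW n), pc k s t ≠ 0 →
    t.1 = s.1 ∧ t.2.map Prod.fst = s.2.map Prod.fst ∧
      List.Forall₂ (· ≤ ·) (s.2.map Prod.snd) (t.2.map Prod.snd) ∧
      (t.2.map Prod.snd).sum = (s.2.map Prod.snd).sum + k := by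
  intro k
  induction k with
  | zero =>
    intro s t h
    rw [pc] at h
    split at h
    · subst ‹s = t›
      exact ⟨rfl, rfl, List.forall₂_same.2 fun _ _ => le_rfl, by omega⟩
    · exact absurd rfl h
  | succ k ih =>
    intro s t h
    rw [pc] at h
    obtain ⟨ℓ, hℓ, hne⟩ := Finset.exists_ne_zero_of_sum_ne_zero h
    obtain ⟨h1, h2, h3, h4⟩ := ih (s.1, bump ℓ s.2) t hne
    rw [Finset.mem_range] at hℓ
    refine ⟨h1, by rw [h2]; exact bump_map_fst ℓ s.2, ?_, ?_⟩
    · exact forall2_le_trans (forall2_le_bump ℓ s.2) h3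
    · rw [h4, bump_sum ℓ s.2 hℓ]; omega

theorem pc_head {n : ℕ} : ∀ (k : ℕ) (P : Word n) (i : Fin n) (e : ℕ) (T : Word n),
    pc k (P, (i, e) :: T) (P, (i, e + k) :: T) = 1 := by
  intro k
  induction k with
  | zero => intro P i e T; simp [pc]
  | succ k ih =>
    intro P i e T
    rw [pc]
    simp only [List.length_cons]
    rw [Finset.sum_range_succ']
    have h0 : pc k (P, bump 0 ((i, e) :: T)) (P, (i, e + (k + 1)) :: T) = 1 := by
      rw [bump_cons_zero]
      have he : e + (k + 1) = (e + 1) + k := by omega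
      rw [he]
      exact ih P i (e + 1) T
    have hrest : ∀ j ∈ Finset.range T.length,
        pc k (P, bump (j + 1) ((i, e) :: T)) (P, (i, e + (k + 1)) :: T) = 0 := by
      intro j hj
      rw [Finset.mem_range] at hj
      by_contra hne
      obtain ⟨-, -, h3, h4⟩ := pc_ne k _ _ hne
      rw [bump_cons_succ] at h3 h4
      simp only [List.map_cons, List.sum_cons] at h3 h4
      cases h3 with
      | cons hh ht =>
        have hs := forall2_le_sum ht
        have hb := bump_sum j T hj
        omega
    rw [Finset.sum_congr rfl hrest, Finset.sum_const_zero, zero_add]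
    exact h0

theorem dsp_pow_single {n : ℕ} : ∀ (k : ℕ) (s : SW n) (c : F) (t : SW n),
    ((Dsp F ^ k) (Finsupp.single s c)) t = pc k s t • c := by
  intro k
  induction k with
  | zero =>
    intro s c t
    rw [pow_zero, Module.End.one_apply, pc, Finsupp.single_apply]
    split <;> simp
  | succ k ih =>
    intro s c t
    rw [pow_succ, Module.End.mul_apply, Dsp_single, map_sum, pc]
    rw [Finsupp.finset_sum_apply]
    rw [Finset.sum_congr rfl fun ℓ _ => ih (s.1, bump ℓ s.2) c t]
    rw [← Finset.sum_smul]

theorem dsp_pow_apply {n : ℕ} (k : ℕ) (μ : SW n →₀ F) (t : SW n) :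
    ((Dsp F ^ k) μ) t = μ.sum fun s c => pc k s t • c := by
  induction μ using Finsupp.induction_linear with
  | zero => simp
  | add f g hf hg =>
    rw [map_add, Finsupp.add_apply, hf, hg,
      Finsupp.sum_add_index' (fun s => by simp) (fun s c₁ c₂ => by rw [smul_add])]
  | single s c =>
    rw [dsp_pow_single, Finsupp.sum_single_index (by simp)]

theorem csp_apply {n : ℕ} (μ : SW n →₀ F) (L : Word n) :
    Csp F μ L = μ.sum fun s c => if s.1 ++ s.2 = L then c else 0 := by
  induction μ using Finsupp.induction_linear with
  | zero => simp
  | add f g hf hg =>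
    rw [map_add, Finsupp.add_apply, hf, hg,
      Finsupp.sum_add_index' (fun s => by simp) (fun s c₁ c₂ => by split <;> simp)]
  | single s c =>
    rw [Csp_single, Finsupp.sum_single_index (by simp), Finsupp.single_apply]

def contrib {n : ℕ} (k : ℕ) (s : SW n) (L : Word n) : ℕ :=
  if L.take s.1.length = s.1 then pc k s (s.1, L.drop s.1.length) else 0

theorem csp_dsp_pow_apply {n : ℕ} (k : ℕ) (μ : SW n →₀ F) (L : Word n) :
    Csp F ((Dsp F ^ k) μ) L = μ.sum fun s c => contrib k s L • c := by
  induction μ using Finsupp.induction_linear with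
  | zero => simp
  | add f g hf hg =>
    rw [map_add, map_add, Finsupp.add_apply, hf, hg,
      Finsupp.sum_add_index' (fun s => by simp) (fun s c₁ c₂ => by rw [smul_add])]
  | single s c =>
    rw [Finsupp.sum_single_index (by simp)]
    set ν := (Dsp F ^ k) (Finsupp.single s c) with hν
    rw [csp_apply]
    have hsupp : ∀ t ∈ ν.support, t.1 = s.1 := by
      intro t ht
      rw [Finsupp.mem_support_iff, hν, dsp_pow_single] at ht
      have hpc : pc k s t ≠ 0 := fun h => ht (by rw [h, zero_smul])
      exact (pc_ne k s t hpc).1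
    by_cases hT : L.take s.1.length = s.1
    · have hcong : ∀ t ∈ ν.support,
          (if t.1 ++ t.2 = L then ν t else 0) =
            if t = (s.1, L.drop s.1.length) then ν t else 0 := by
        intro t ht
        have h1 := hsupp t ht
        congr 1
        apply propext
        constructor
        · intro hcat
          have : t.2 = L.drop s.1.length := by
            rw [← hcat, h1, List.drop_left]
          exact Prod.ext h1 this
        · intro hteq
          rw [hteq]
          simp only
          conv_rhs => rw [← List.take_append_drop s.1.length L]
          rw [hT]
      rw [Finsupp.sum, Finset.sum_congr rfl hcong, Finset.sum_ite_eq' ν.support]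
      rw [contrib, if_pos hT]
      by_cases hmem : (s.1, L.drop s.1.length) ∈ ν.support
      · rw [if_pos hmem, hν, dsp_pow_single]
      · rw [if_neg hmem]
        rw [Finsupp.notMem_support_iff] at hmem
        rw [hν, dsp_pow_single] at hmem
        rw [hmem]
    · have hall : ∀ t ∈ ν.support, (if t.1 ++ t.2 = L then ν t else 0) = 0 := by
        intro t ht
        rw [if_neg]
        intro hcat
        apply hT
        rw [← hcat, hsupp t ht, List.take_left]
      rw [Finsupp.sum, Finset.sum_congr rfl hall, Finset.sum_const_zero, contrib, if_neg hT,
        zero_smul]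

end PC
section ClaimC

open S18

variable {F : Type*} [Field F]

theorem forall2_eq_of_sum : ∀ {l₁ l₂ : List ℕ}, List.Forall₂ (· ≤ ·) l₁ l₂ →
    l₁.sum = l₂.sum → l₁ = l₂ := by
  intro l₁ l₂ h
  induction h with
  | nil => intro; rfl
  | @cons a b l₁' l₂' hab ht ih =>
    intro hsum
    simp only [List.sum_cons] at hsum
    have hts := forall2_le_sum ht
    have : a = b := by omega
    have : l₁'.sum = l₂'.sum := by omega
    rw [‹a = b›, ih this]

theorem pairlist_ext {α β : Type*} : ∀ (l₁ l₂ : List (α × β)),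
    l₁.map Prod.fst = l₂.map Prod.fst → l₁.map Prod.snd = l₂.map Prod.snd → l₁ = l₂ := by
  intro l₁
  induction l₁ with
  | nil => intro l₂ h _; cases l₂ <;> simp_all
  | cons p t ih =>
    intro l₂ h1 h2
    cases l₂ with
    | nil => simp_all
    | cons q t₂ =>
      simp only [List.map_cons, List.cons.injEq] at h1 h2
      rw [ih t₂ h1.2 h2.2, show p = q from Prod.ext h1.1 h2.1]

theorem claimC {n : ℕ} (μ : SW n →₀ F) (hμ : μ ≠ 0) :
    ∃ k, Csp F ((Dsp F ^ k) μ) ≠ 0 := by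
  classical
  have hsupp : μ.support.Nonempty := Finsupp.support_nonempty_iff.2 hμ
  have himg : (μ.support.image fun s => s.1.length).Nonempty := hsupp.image _
  set p₀ := (μ.support.image fun s => s.1.length).min' himg with hp₀
  have hmin : ∀ s ∈ μ.support, p₀ ≤ s.1.length := fun s hs =>
    Finset.min'_le _ _ (Finset.mem_image_of_mem _ hs)
  by_cases hA : ∃ s₀ ∈ μ.support, s₀.1.length = p₀ ∧ s₀.2 = []
  · obtain ⟨s₀, hs₀, hlen, hnil⟩ := hA
    refine ⟨0, fun hC => ?_⟩
    have hval : Csp F ((Dsp F ^ 0) μ) s₀.1 = μ s₀ := by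
      rw [pow_zero, Module.End.one_apply, csp_apply, Finsupp.sum]
      have hcong : ∀ s ∈ μ.support,
          (if s.1 ++ s.2 = s₀.1 then μ s else 0) = if s = s₀ then μ s else 0 := by
        intro s hs
        congr 1
        apply propext
        constructor
        · intro hcat
          have hl : s.1.length + s.2.length = p₀ := by
            rw [← hlen, ← hcat]; simp
          have h2 : s.2 = [] := by
            have := hmin s hs
            exact List.length_eq_zero_iff.1 (by omega)
          rw [h2, List.append_nil] at hcat
          exact Prod.ext hcat (by rw [h2, hnil])
        · intro h; rw [h, hnil, List.append_nil]
      rw [Finset.sum_congr rfl hcong, Finset.sum_ite_eq' μ.support, if_pos hs₀]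
    rw [hC] at hval
    simp only [Finsupp.coe_zero, Pi.zero_apply] at hval
    exact (Finsupp.mem_support_iff.1 hs₀) hval.symm
  · push_neg at hA
    have hmm := Finset.min'_mem _ himg
    rw [← hp₀, Finset.mem_image] at hmm
    obtain ⟨s₁, hs₁, hs₁len⟩ := hmm
    set Cl := μ.support.filter
      (fun s => s.1 = s₁.1 ∧ s.2.map Prod.fst = s₁.2.map Prod.fst) with hCl
    have hs₁Cl : s₁ ∈ Cl := by
      rw [hCl, Finset.mem_filter]; exact ⟨hs₁, rfl, rfl⟩
    obtain ⟨st, hstCl, hstmax⟩ := Cl.exists_max_image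
      (fun s => (s.2.map Prod.snd).headD 0) ⟨s₁, hs₁Cl⟩
    rw [hCl, Finset.mem_filter] at hstCl
    obtain ⟨hst, hstP, hstfst⟩ := hstCl
    have hstlen : st.1.length = p₀ := by rw [hstP, hs₁len]
    have hstnnil : st.2 ≠ [] := by
      intro h
      exact hA st hst hstlen h
    obtain ⟨⟨i₀, e₀⟩, T₀, hst2⟩ := List.exists_cons_of_ne_nil hstnnil
    -- the bound
    set k := (μ.support.sup fun s => (s.1.map Prod.snd).sum + (s.2.map Prod.snd).sum) + 1
      with hk
    set L := st.1 ++ (i₀, e₀ + k) :: T₀ with hL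
    refine ⟨k, fun hC => ?_⟩
    have hcontrib : ∀ s ∈ μ.support, contrib k s L = if s = st then 1 else 0 := by
      intro s hs
      by_cases hseq : s = st
      · rw [if_pos hseq, hseq, contrib, hL, if_pos (by rw [List.take_left]), List.drop_left]
        have hph : pc k (st.1, (i₀, e₀) :: T₀) (st.1, (i₀, e₀ + k) :: T₀) = 1 :=
          pc_head k st.1 i₀ e₀ T₀
        rwa [show ((st.1, (i₀, e₀) :: T₀) : SW n) = st from Prod.ext rfl hst2.symm] at hph
      · rw [if_neg hseq]
        by_contra hne
        rw [contrib] at hne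
        by_cases hT : L.take s.1.length = s.1
        case neg => rw [if_neg hT] at hne; exact hne rfl
        case pos =>
          rw [if_pos hT] at hne
          obtain ⟨-, hfst, hle, hsum⟩ := pc_ne k s _ hne
          dsimp only at hfst hle hsum
          -- s.1 length either = p₀ or > p₀
          rcases Nat.eq_or_lt_of_le (hmin s hs) with heq | hlt
          · -- prefix length exactly p₀
            have hlen1 : s.1.length = st.1.length := by omega
            have hs1 : s.1 = st.1 := by
              have htake : L.take s.1.length = st.1 := by
                rw [hlen1, hL, List.take_left]
              rw [hT] at htake
              exact htake
            have hdrop : L.drop s.1.length = (i₀, e₀ + k) :: T₀ := by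
              rw [hlen1, hL, List.drop_left]
            rw [hdrop] at hfst hle hsum
            have hfst' : s.2.map Prod.fst = i₀ :: T₀.map Prod.fst := by
              rw [← hfst]; simp
            -- s ∈ Cl
            have hsCl : s ∈ Cl := by
              rw [hCl, Finset.mem_filter]
              refine ⟨hs, by rw [hs1, hstP], ?_⟩
              rw [hfst', ← hstfst, hst2]
              simp
            have hmax := hstmax s hsCl
            -- destructure s.2
            have hs2nnil : s.2 ≠ [] := by
              intro h; rw [h] at hfst'; simp at hfst'
            obtain ⟨⟨i₁, e₁⟩, T₁, hs2⟩ := List.exists_cons_of_ne_nil hs2nnil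
            rw [hs2] at hle hsum hmax hfst'
            rw [hst2] at hmax
            simp only [List.map_cons, List.headD_cons, List.sum_cons,
              List.cons.injEq] at hle hsum hmax hfst'
            cases hle with
            | cons hh ht =>
              have hts := forall2_le_sum ht
              have he₁ : e₁ = e₀ := by omega
              have hTs : (T₁.map Prod.snd).sum = (T₀.map Prod.snd).sum := by omega
              have hT₁ : T₁ = T₀ := by
                apply pairlist_ext
                · exact hfst'.2
                · exact forall2_eq_of_sum ht hTs
              apply hseq
              apply Prod.ext hs1
              rw [hs2, hst2, hT₁, he₁, hfst'.1]
          · -- prefix longer: contains the huge exponent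
            have hmem : (i₀, e₀ + k) ∈ s.1 := by
              conv_lhs => rw [← hT]
              rw [hL, List.take_append]
              have h1 : st.1.take s.1.length = st.1 :=
                List.take_of_length_le (by omega)
              obtain ⟨j, hj⟩ : ∃ j, s.1.length - st.1.length = j + 1 :=
                ⟨s.1.length - st.1.length - 1, by omega⟩
              rw [h1, hj]
              simp
            have hbig : e₀ + k ≤ (s.1.map Prod.snd).sum :=
              List.single_le_sum (fun x _ => Nat.zero_le x) _
                (List.mem_map_of_mem (f := Prod.snd) hmem)
            have hsup := Finset.le_sup (f := fun s : SW n =>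
              (s.1.map Prod.snd).sum + (s.2.map Prod.snd).sum) hs
            omega
    have hval : Csp F ((Dsp F ^ k) μ) L = μ st := by
      rw [csp_dsp_pow_apply, Finsupp.sum]
      have : ∀ s ∈ μ.support, contrib k s L • μ s = if s = st then μ s else 0 := by
        intro s hs
        rw [hcontrib s hs]
        split <;> simp
      rw [Finset.sum_congr rfl this, Finset.sum_ite_eq' μ.support, if_pos hst]
    rw [hC] at hval
    simp only [Finsupp.coe_zero, Pi.zero_apply] at hval
    exact (Finsupp.mem_support_iff.1 hst) hval.symm

end ClaimC
section SplitW

open S18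

def splitW {n : ℕ} (i : Fin n) : Word n → Word n × ℕ × Word n
  | [] => ([], 0, [])
  | p :: t =>
    if p.1 = i then ([], p.2, t)
    else ((p :: (splitW i t).1, (splitW i t).2.1, (splitW i t).2.2))

theorem splitW_reconstruct {n : ℕ} (i : Fin n) : ∀ (w : Word n), i ∈ w.map Prod.fst →
    w = (splitW i w).1 ++ (i, (splitW i w).2.1) :: (splitW i w).2.2 := by
  intro w
  induction w with
  | nil => simp
  | cons p t ih =>
    intro hmem
    rw [splitW]
    by_cases h : p.1 = i
    · rw [if_pos h]
      show p :: t = [] ++ (i, p.2) :: t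
      rw [List.nil_append, show ((i : Fin n), p.2) = p from by rw [← h]]
    · rw [if_neg h]
      simp only [List.cons_append, List.cons.injEq]
      refine ⟨trivial, ih ?_⟩
      simp only [List.map_cons, List.mem_cons] at hmem
      rcases hmem with h1 | h2
      · exact absurd h1.symm h
      · exact h2

end SplitW

section Main

open S18

variable {F : Type*} [Field F] {A : Type*} [Ring A] [Algebra F A]

def Listing {n : ℕ} (s : Finset (Fin n)) (w : Word n) : Prop :=
  (w.map Prod.fst).Nodup ∧ ∀ j, j ∈ w.map Prod.fst ↔ j ∈ s

theorem nodup_middle {α : Type*} {l₁ l₂ : List α} {a : α}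
    (h : (l₁ ++ a :: l₂).Nodup) :
    (l₁ ++ l₂).Nodup ∧ a ∉ l₁ ∧ a ∉ l₂ := by
  rw [List.nodup_append] at h ⊢
  obtain ⟨h1, h2, h3⟩ := h
  rw [List.nodup_cons] at h2
  refine ⟨⟨h1, h2.2, fun x hx1 y hy => h3 x hx1 y (List.mem_cons_of_mem _ hy)⟩, ?_, h2.1⟩
  intro hal
  exact h3 a hal a (by simp) rfl

theorem listing_erase {n : ℕ} {s : Finset (Fin n)} {i : Fin n} {P S : Word n} {c' : ℕ}
    (h : Listing s (P ++ (i, c') :: S)) : Listing (s.erase i) (P ++ S) := by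
  obtain ⟨hnd, hiff⟩ := h
  rw [List.map_append, List.map_cons] at hnd hiff
  obtain ⟨hnd', hnp, hns⟩ := nodup_middle hnd
  refine ⟨?_, fun j => ?_⟩
  · rw [List.map_append]; exact hnd'
  · rw [List.map_append]
    by_cases hj : j = i
    · subst hj
      constructor
      · intro hmem
        rcases List.mem_append.1 hmem with h' | h'
        · exact absurd h' hnp
        · exact absurd h' hns
      · intro hmem
        exact absurd hmem (Finset.notMem_erase _ _)
    · rw [Finset.mem_erase]
      have := hiff j
      rw [List.mem_append, List.mem_cons] at this
      rw [List.mem_append]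
      dsimp only at this
      constructor
      · intro hmem
        refine ⟨hj, this.1 ?_⟩
        tauto
      · rintro ⟨-, hmem⟩
        have := this.2 hmem
        tauto

theorem GEN {n : ℕ} (v : A) (hv : ∀ k : ℕ, 1 ≤ k → ∃ z : A, (adE v)^[k] z = 1)
    (a : A) (ha : ∀ k : ℕ, 1 ≤ k → ∃ x : A, (adE v)^[k] x = a) :
    ∀ (N : ℕ) (s : Finset (Fin n)), s.card = N → s.Nonempty →
      ∀ (r : ℕ) (ν : Word n →₀ F),
      (∀ w ∈ ν.support, Listing s w) →
      (∀ w ∈ ν.support, (w.map Prod.snd).sum = r) →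
      ν ≠ 0 → ∃ x : Fin n → A, Ev v x ν = a := by
  intro N
  induction N with
  | zero =>
    intro s hcard hne
    exact absurd (Finset.card_eq_zero.1 hcard) hne.ne_empty
  | succ N ih =>
    intro s hcard hne r ν hlist hhom hν
    classical
    obtain ⟨istar, histar⟩ := hne
    have hsupp_ne : ν.support.Nonempty := Finsupp.support_nonempty_iff.2 hν
    have hmemi : ∀ w ∈ ν.support, istar ∈ w.map Prod.fst := fun w hw =>
      ((hlist w hw).2 istar).2 histar
    rcases Nat.eq_zero_or_pos N with rfl | hN
    · -- base case : single variable
      have hsing : ∀ j ∈ s, j = istar := by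
        intro j hj
        obtain ⟨b, hb⟩ := Finset.card_eq_one.1 hcard
        rw [hb, Finset.mem_singleton] at hj histar
        rw [hj, histar]
      have hword : ∀ w ∈ ν.support, w = [(istar, r)] := by
        intro w hw
        obtain ⟨hnd, hiff⟩ := hlist w hw
        have hhw := hhom w hw
        cases w with
        | nil => exact absurd (hmemi _ hw) (by simp)
        | cons p t =>
          cases t with
          | nil =>
            simp only [List.map_cons, List.map_nil, List.sum_cons, List.sum_nil,
              add_zero] at hhw
            have : p.1 = istar := hsing p.1 ((hiff p.1).1 (by simp))
            rw [show p = (istar, r) from Prod.ext this hhw]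
          | cons q t' =>
            exfalso
            have hp : p.1 = istar := hsing p.1 ((hiff p.1).1 (by simp))
            have hq : q.1 = istar := hsing q.1 ((hiff q.1).1 (by simp))
            simp only [List.map_cons, List.nodup_cons, List.mem_cons] at hnd
            exact hnd.1 (Or.inl (by rw [hp, hq]))
      have hw₀ := hsupp_ne.choose_spec
      have hw₀w : hsupp_ne.choose = [(istar, r)] := hword _ hw₀
      have hκ : ν [(istar, r)] ≠ 0 := by
        rw [← hw₀w]; exact Finsupp.mem_support_iff.1 hw₀
      have hsupp_eq : ν.support = {[(istar, r)]} := by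
        apply Finset.eq_singleton_iff_unique_mem.2
        exact ⟨by rw [← hw₀w]; exact hw₀, hword⟩
      -- choose u with D^[r] u = κ⁻¹ • a
      set κ := ν [(istar, r)] with hκdef
      obtain ⟨u, hu⟩ : ∃ u : A, (adE v)^[r] u = κ⁻¹ • a := by
        rcases Nat.eq_zero_or_pos r with rfl | hr
        · exact ⟨κ⁻¹ • a, rfl⟩
        · obtain ⟨u', hu'⟩ := ha r hr
          exact ⟨κ⁻¹ • u', by rw [adE_iter_smul, hu']⟩
      refine ⟨fun _ => u, ?_⟩
      rw [Ev, Finsupp.linearCombination_apply, Finsupp.sum, hsupp_eq, Finset.sum_singleton]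
      rw [wval, List.map_cons, List.map_nil, List.prod_cons, List.prod_nil, mul_one]
      rw [hu, smul_smul, mul_inv_cancel₀ hκ, one_smul]
    · -- main case
      set c := (ν.support.image fun w => (splitW istar w).2.1).min' (hsupp_ne.image _)
        with hc
      have hcmin : ∀ w ∈ ν.support, c ≤ (splitW istar w).2.1 := fun w hw =>
        Finset.min'_le _ _ (Finset.mem_image_of_mem _ hw)
      have hcmem := Finset.min'_mem _ (hsupp_ne.image fun w => (splitW istar w).2.1)
      rw [← hc, Finset.mem_image] at hcmem
      obtain ⟨w₀, hw₀, hw₀c⟩ := hcmem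
      set μ : SW n →₀ F := ν.sum fun w cw =>
        if (splitW istar w).2.1 = c then
          Finsupp.single ((splitW istar w).1, (splitW istar w).2.2) cw else 0 with hμdef
      have hμcoe : ∀ pt : SW n, μ pt = ∑ w ∈ ν.support,
          (if (splitW istar w).2.1 = c ∧ ((splitW istar w).1, (splitW istar w).2.2) = pt
            then ν w else 0) := by
        intro pt
        rw [hμdef, Finsupp.sum_apply, Finsupp.sum]
        refine Finset.sum_congr rfl fun w hw => ?_
        by_cases h1 : (splitW istar w).2.1 = c
        · rw [if_pos h1, Finsupp.single_apply]
          by_cases h2 : ((splitW istar w).1, (splitW istar w).2.2) = pt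
          · rw [if_pos h2, if_pos ⟨h1, h2⟩]
          · rw [if_neg h2, if_neg (fun hcc => h2 hcc.2)]
        · rw [if_neg h1, if_neg (fun hcc => h1 hcc.1), Finsupp.coe_zero, Pi.zero_apply]
      -- injectivity of splitting on the layer
      have hinj : ∀ w ∈ ν.support, ∀ w' ∈ ν.support,
          (splitW istar w).2.1 = c → (splitW istar w').2.1 = c →
          ((splitW istar w).1, (splitW istar w).2.2) =
            ((splitW istar w').1, (splitW istar w').2.2) → w = w' := by
        intro w hw w' hw' h1 h1' h2
        rw [splitW_reconstruct istar w (hmemi w hw),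
          splitW_reconstruct istar w' (hmemi w' hw'), h1, h1']
        rw [Prod.mk.injEq] at h2
        rw [h2.1, h2.2]
      have hμne : μ ≠ 0 := by
        intro h0
        have := hμcoe ((splitW istar w₀).1, (splitW istar w₀).2.2)
        rw [h0] at this
        simp only [Finsupp.coe_zero, Pi.zero_apply] at this
        have hcong : ∀ w ∈ ν.support,
            (if (splitW istar w).2.1 = c ∧ ((splitW istar w).1, (splitW istar w).2.2) =
              ((splitW istar w₀).1, (splitW istar w₀).2.2) then ν w else 0) =
            if w = w₀ then ν w else 0 := by
          intro w hw
          congr 1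
          apply propext
          constructor
          · intro ⟨hc1, hc2⟩
            exact hinj w hw w₀ hw₀ hc1 hw₀c hc2
          · intro h; subst h; exact ⟨hw₀c, rfl⟩
        rw [Finset.sum_congr rfl hcong, Finset.sum_ite_eq' ν.support, if_pos hw₀] at this
        exact Finsupp.mem_support_iff.1 hw₀ this.symm
      -- support of μ
      have hμsupp : ∀ ps ∈ μ.support, ∃ w ∈ ν.support,
          (splitW istar w).2.1 = c ∧ ps = ((splitW istar w).1, (splitW istar w).2.2) := by
        intro ps hps
        rw [Finsupp.mem_support_iff] at hps
        rw [hμcoe] at hps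
        obtain ⟨w, hw, hterm⟩ := Finset.exists_ne_zero_of_sum_ne_zero hps
        refine ⟨w, hw, ?_⟩
        by_cases hcc : (splitW istar w).2.1 = c ∧
            ((splitW istar w).1, (splitW istar w).2.2) = ps
        · exact ⟨hcc.1, hcc.2.symm⟩
        · rw [if_neg hcc] at hterm; exact absurd rfl hterm
      -- properties of μ-support pairs
      have hpair : ∀ ps ∈ μ.support, Listing (s.erase istar) (ps.1 ++ ps.2) ∧
          ((ps.1 ++ ps.2).map Prod.snd).sum + c = r := by
        intro ps hps
        obtain ⟨w, hw, hwc, hpsw⟩ := hμsupp ps hps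
        have hrec := splitW_reconstruct istar w (hmemi w hw)
        rw [hwc] at hrec
        have hl := hlist w hw
        have hh := hhom w hw
        rw [hrec] at hl hh
        subst hpsw
        constructor
        · exact listing_erase hl
        · rw [List.map_append, List.map_cons, List.sum_append, List.sum_cons] at hh
          rw [List.map_append, List.sum_append]
          dsimp only
          omega
      -- find k
      have hex := claimC μ hμne
      set k := Nat.find hex with hkdef
      have hkne : Csp F ((Dsp F ^ k) μ) ≠ 0 := Nat.find_spec hex
      have hlow : ∀ j, j < k → Csp F ((Dsp F ^ j) μ) = 0 := by
        intro j hj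
        have := Nat.find_min hex hj
        exact not_not.1 this
      set ν' := Csp F ((Dsp F ^ k) μ) with hν'def
      -- support of ν'
      have hν'supp : ∀ w' ∈ ν'.support, Listing (s.erase istar) w' ∧
          (w'.map Prod.snd).sum + c = r + k := by
        intro w' hw'
        rw [Finsupp.mem_support_iff, hν'def, csp_apply, Finsupp.sum] at hw'
        obtain ⟨t, ht, hterm⟩ := Finset.exists_ne_zero_of_sum_ne_zero hw'
        have hcat : t.1 ++ t.2 = w' := by
          by_cases h' : t.1 ++ t.2 = w'
          · exact h'
          · rw [if_neg h'] at hterm; exact absurd rfl hterm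
        rw [Finsupp.mem_support_iff, dsp_pow_apply, Finsupp.sum] at ht
        obtain ⟨ps, hps, hterm2⟩ := Finset.exists_ne_zero_of_sum_ne_zero ht
        have hpc : pc k ps t ≠ 0 := fun h => hterm2 (by rw [h, zero_smul])
        obtain ⟨h1, h2, -, h4⟩ := pc_ne k ps t hpc
        obtain ⟨hlst, hsum⟩ := hpair ps hps
        have hfst : w'.map Prod.fst = (ps.1 ++ ps.2).map Prod.fst := by
          rw [← hcat, List.map_append, List.map_append, h1, h2]
        constructor
        · exact ⟨hfst ▸ hlst.1, fun j => hfst ▸ hlst.2 j⟩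
        · rw [← hcat, List.map_append, List.sum_append, h1, h4]
          rw [List.map_append, List.sum_append] at hsum
          omega
      -- apply induction hypothesis
      have hcard' : (s.erase istar).card = N := by
        rw [Finset.card_erase_of_mem histar, hcard]
        omega
      have hne' : (s.erase istar).Nonempty := by
        rw [← Finset.card_pos, hcard']; exact hN
      obtain ⟨x', hx'⟩ := ih (s.erase istar) hcard' hne' (r + k - c) ν'
        (fun w' hw' => (hν'supp w' hw').1)
        (fun w' hw' => by have := (hν'supp w' hw').2; omega)
        hkne
      -- the gadget
      obtain ⟨g, hg1, hg2⟩ := gadget v hv c k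
      refine ⟨Function.update x' istar g, ?_⟩
      -- final computation
      have Eq1 : Ev v (Function.update x' istar g) ν = Esp v x' k μ := by
        rw [hμdef, map_finsuppSum, Ev, Finsupp.linearCombination_apply, Finsupp.sum,
          Finsupp.sum]
        refine Finset.sum_congr rfl fun w hw => ?_
        have hrec := splitW_reconstruct istar w (hmemi w hw)
        have hnd := (hlist w hw).1
        rw [hrec, List.map_append, List.map_cons] at hnd
        obtain ⟨-, hnp, hns⟩ := nodup_middle hnd
        have hwv : wval v (Function.update x' istar g) w =
            wval v x' (splitW istar w).1 *
              ((adE v)^[(splitW istar w).2.1] g * wval v x' (splitW istar w).2.2) := by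
          conv_lhs => rw [hrec]
          rw [wval_append, wval_cons, Function.update_self,
            wval_update v x' istar g _ hnp, wval_update v x' istar g _ hns]
        rw [hwv]
        by_cases hcc : (splitW istar w).2.1 = c
        · rw [hcc, hg1, if_pos rfl, Esp_single]
        · rw [if_neg hcc, map_zero]
          have : c < (splitW istar w).2.1 := lt_of_le_of_ne (hcmin w hw) (Ne.symm hcc)
          rw [hg2 _ this, zero_mul, mul_zero, smul_zero]
      rw [Eq1, esp_eq_of_lower_zero v x' k μ hlow, ← hν'def, hx']

end Main
section Final

open S18

theorem word_inj {n : ℕ} (σ τ : Equiv.Perm (Fin n)) (b d : Fin n → ℕ)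
    (h : (List.ofFn fun j => ((σ j : Fin n), b (σ j))) =
      (List.ofFn fun j => ((τ j : Fin n), d (τ j)))) :
    σ = τ ∧ b = d := by
  have h' := List.ofFn_inj.1 h
  have hcomp : ∀ j, σ j = τ j ∧ b (σ j) = d (τ j) := by
    intro j
    have := congrFun h' j
    rw [Prod.mk.injEq] at this
    exact this
  have hσ : σ = τ := Equiv.ext fun j => (hcomp j).1
  refine ⟨hσ, funext fun i => ?_⟩
  have := (hcomp (σ.symm i)).2
  rw [Equiv.apply_symm_apply] at this
  rw [this, ← hσ, Equiv.apply_symm_apply]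

/-- Main theorem, type one: if `1 ∈ [v,A]_k` for every `k ≥ 1`, then `A_∞(v)` is
contained in the image of every nonzero admissible partially commutative
polynomial of type one. -/
theorem stmt_18 (F : Type*) [Field F] (A : Type*) [Ring A] [Algebra F A]
    (v : A) (hv : ∀ k : ℕ, 1 ≤ k → ∃ z : A, (adE v)^[k] z = 1)
    (n : ℕ) (hn : 1 ≤ n) (r : ℕ)
    (lam : Equiv.Perm (Fin n) → (Fin n → ℕ) → F)
    (hlam : ∃ σ, ∃ b ∈ Finset.Nat.antidiagonalTuple n r, lam σ b ≠ 0)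
    (a : A) (ha : ∀ k : ℕ, 1 ≤ k → ∃ x : A, (adE v)^[k] x = a) :
    ∃ x : Fin n → A,
      a = ∑ σ : Equiv.Perm (Fin n), ∑ b ∈ Finset.Nat.antidiagonalTuple n r,
        lam σ b • (List.ofFn fun j => (adE v)^[b (σ j)] (x (σ j))).prod := by
  classical
  obtain ⟨σ₀, b₀, hb₀mem, hb₀⟩ := hlam
  haveI : Nonempty (Fin n) := Fin.pos_iff_nonempty.1 (by omega)
  set word : Equiv.Perm (Fin n) → (Fin n → ℕ) → Word n :=
    fun σ b => List.ofFn fun j => ((σ j : Fin n), b (σ j)) with hword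
  set ν₀ : Word n →₀ F := ∑ σ : Equiv.Perm (Fin n), ∑ b ∈ Finset.Nat.antidiagonalTuple n r,
    Finsupp.single (word σ b) (lam σ b) with hν₀def
  -- evaluation identity
  have hev : ∀ x : Fin n → A, Ev (F := F) v x ν₀ =
      ∑ σ : Equiv.Perm (Fin n), ∑ b ∈ Finset.Nat.antidiagonalTuple n r,
        lam σ b • (List.ofFn fun j => (adE v)^[b (σ j)] (x (σ j))).prod := by
    intro x
    rw [hν₀def, map_sum]
    refine Finset.sum_congr rfl fun σ _ => ?_
    rw [map_sum]
    refine Finset.sum_congr rfl fun b _ => ?_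
    rw [Ev_single]
    congr 1
    rw [hword, wval, List.map_ofFn]
    rfl
  -- words in the support
  have hsupp : ∀ w ∈ ν₀.support, ∃ σ, ∃ b ∈ Finset.Nat.antidiagonalTuple n r,
      w = word σ b := by
    intro w hw
    rw [Finsupp.mem_support_iff, hν₀def] at hw
    rw [Finsupp.finset_sum_apply] at hw
    obtain ⟨σ, -, h1⟩ := Finset.exists_ne_zero_of_sum_ne_zero hw
    rw [Finsupp.finset_sum_apply] at h1
    obtain ⟨b, hb, h2⟩ := Finset.exists_ne_zero_of_sum_ne_zero h1
    rw [Finsupp.single_apply] at h2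
    refine ⟨σ, b, hb, ?_⟩
    by_cases he : word σ b = w
    · exact he.symm
    · rw [if_neg he] at h2; exact absurd rfl h2
  have hfst : ∀ σ (b : Fin n → ℕ), (word σ b).map Prod.fst = List.ofFn σ := by
    intro σ b
    rw [hword, List.map_ofFn]
    rfl
  have hlisting : ∀ w ∈ ν₀.support, Listing Finset.univ w := by
    intro w hw
    obtain ⟨σ, b, -, rfl⟩ := hsupp w hw
    constructor
    · rw [hfst, List.nodup_ofFn]
      exact σ.injective
    · intro j
      rw [hfst]
      simp only [List.mem_ofFn, Finset.mem_univ, iff_true]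
      exact ⟨σ.symm j, σ.apply_symm_apply j⟩
  have hhom : ∀ w ∈ ν₀.support, (w.map Prod.snd).sum = r := by
    intro w hw
    obtain ⟨σ, b, hb, rfl⟩ := hsupp w hw
    rw [hword, List.map_ofFn]
    have : (List.ofFn fun j => b (σ j)).sum = ∑ j, b (σ j) := List.sum_ofFn
    rw [show (Prod.snd ∘ fun j => ((σ j : Fin n), b (σ j))) = fun j => b (σ j) from rfl,
      this, Equiv.sum_comp σ b]
    exact Finset.Nat.mem_antidiagonalTuple.1 hb
  have hνne : ν₀ ≠ 0 := by
    intro h0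
    have hval : ν₀ (word σ₀ b₀) = lam σ₀ b₀ := by
      rw [hν₀def, Finsupp.finset_sum_apply]
      rw [Finset.sum_eq_single σ₀]
      · rw [Finsupp.finset_sum_apply, Finset.sum_eq_single_of_mem b₀ hb₀mem]
        · rw [Finsupp.single_apply, if_pos rfl]
        · intro b hb hbne
          rw [Finsupp.single_apply, if_neg]
          intro he
          exact hbne (word_inj _ _ _ _ he).2
      · intro σ _ hσne
        rw [Finsupp.finset_sum_apply]
        apply Finset.sum_eq_zero
        intro b hb
        rw [Finsupp.single_apply, if_neg]
        intro he
        exact hσne (word_inj _ _ _ _ he).1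
      · intro habs
        exact absurd (Finset.mem_univ σ₀) habs
    rw [h0] at hval
    simp only [Finsupp.coe_zero, Pi.zero_apply] at hval
    exact hb₀ hval.symm
  obtain ⟨x, hx⟩ := GEN v hv a ha Finset.univ.card Finset.univ rfl Finset.univ_nonempty
    r ν₀ hlisting hhom hνne
  exact ⟨x, by rw [← hev x, hx]⟩

end Final
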